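/- Quadratic lower bound on the covering length: for every n ≥ 1, every reconfigurable execution of the broadcast protocol B_n covering {☺} has length at least (n² + 5n)/2. Since every lossy execution induces a reconfigurable one of the same length, the same lower bound holds for every lossy execution of B_n covering {☺}. -/

import Mathlib

/-- A broadcast protocol over finite state set `Q` and finite message alphabet `M`.
`I` is the set of initial states, `br q m q'` means `(q, !!m, q') ∈ Δ` (a broadcast
transition) and `rcv q m q'` means `(q, ??m, q') ∈ Δ` (a reception transition).
The protocol is complete for receptions. -/
structure BroadcastProtocol (Q M : Type) [Fintype Q] [DecidableEq Q] [Fintype M] where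
  I : Finset Q
  br : Q → M → Q → Prop
  rcv : Q → M → Q → Prop
  complete : ∀ q m, ∃ q', rcv q m q'

section Execs
variable {Q M : Type} [Fintype Q] [DecidableEq Q] [Fintype M]

/-- A reconfigurable execution of length `r` over the finite node type `ν`:
`lab i v` is the state of node `v` in the `i`-th configuration, `edges i` is the
(symmetric, irreflexive) communication topology of the `i`-th configuration,
and in the `i`-th step node `sender i` broadcasts message `msg i` to its
neighbours; the topology may change arbitrarily at each step. -/
structure RExec (P : BroadcastProtocol Q M) (ν : Type) [Fintype ν] [DecidableEq ν]
    (r : ℕ) where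
  lab : Fin (r + 1) → ν → Q
  edges : Fin (r + 1) → ν → ν → Prop
  edges_symm : ∀ i, Symmetric (edges i)
  edges_irrefl : ∀ i, Irreflexive (edges i)
  sender : Fin r → ν
  msg : Fin r → M
  init : ∀ v, lab 0 v ∈ P.I
  step_br : ∀ i : Fin r, P.br (lab i.castSucc (sender i)) (msg i) (lab i.succ (sender i))
  step_rcv : ∀ i : Fin r, ∀ v, v ≠ sender i →
    (edges i.castSucc (sender i) v → P.rcv (lab i.castSucc v) (msg i) (lab i.succ v)) ∧
    (¬ edges i.castSucc (sender i) v → lab i.succ v = lab i.castSucc v)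

namespace RExec

variable {P : BroadcastProtocol Q M} {ν : Type} [Fintype ν] [DecidableEq ν] {r : ℕ}

/-- Labelling of the last configuration. -/
def lastLab (ρ : RExec P ν r) : ν → Q := ρ.lab (Fin.last r)

/-- The execution covers `F` if a node of the last configuration is labelled in `F`. -/
def Covers (ρ : RExec P ν r) (F : Set Q) : Prop := ∃ v, ρ.lastLab v ∈ F

/-- The active length of node `v`: the number of steps in which `v` broadcasts. -/
def activeLen (ρ : RExec P ν r) (v : ν) : ℕ :=
  (Finset.univ.filter fun i : Fin r => ρ.sender i = v).card

end RExec

/-- A lossy execution of length `r` over the finite node type `ν`: the communication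
topology `E` is fixed throughout, and in the `i`-th step node `sender i` broadcasts
message `msg i`, which is lost (reaching no node) iff `lost i = true`. -/
structure LExec (P : BroadcastProtocol Q M) (ν : Type) [Fintype ν] [DecidableEq ν]
    (r : ℕ) where
  lab : Fin (r + 1) → ν → Q
  E : ν → ν → Prop
  E_symm : Symmetric E
  E_irrefl : Irreflexive E
  sender : Fin r → ν
  msg : Fin r → M
  lost : Fin r → Bool
  init : ∀ v, lab 0 v ∈ P.I
  step_br : ∀ i : Fin r, P.br (lab i.castSucc (sender i)) (msg i) (lab i.succ (sender i))
  step_lost : ∀ i : Fin r, lost i = true → ∀ v, v ≠ sender i →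
    lab i.succ v = lab i.castSucc v
  step_real : ∀ i : Fin r, lost i = false → ∀ v, v ≠ sender i →
    (E (sender i) v → P.rcv (lab i.castSucc v) (msg i) (lab i.succ v)) ∧
    (¬ E (sender i) v → lab i.succ v = lab i.castSucc v)

namespace LExec

variable {P : BroadcastProtocol Q M} {ν : Type} [Fintype ν] [DecidableEq ν] {r : ℕ}

/-- Labelling of the last configuration. -/
def lastLab (ρ : LExec P ν r) : ν → Q := ρ.lab (Fin.last r)

/-- The execution covers `F` if a node of the last configuration is labelled in `F`. -/
def Covers (ρ : LExec P ν r) (F : Set Q) : Prop := ∃ v, ρ.lastLab v ∈ F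

/-- The active length of node `v`: the number of broadcasts (lost or not) of `v`. -/
def activeLen (ρ : LExec P ν r) (v : ν) : ℕ :=
  (Finset.univ.filter fun i : Fin r => ρ.sender i = v).card

/-- The real active length of node `v`: the number of non-lost broadcasts of `v`. -/
def realActiveLen (ρ : LExec P ν r) (v : ν) : ℕ :=
  (Finset.univ.filter fun i : Fin r => ρ.sender i = v ∧ ρ.lost i = false).card

end LExec

end Execs
/- ## The protocol B_n (linear cutoff / quadratic length lower bounds) -/

def BnBr (n : ℕ) : Fin (2 * n + 1) → (Fin n ⊕ Fin n) → Fin (2 * n + 1) → Prop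
  | q, .inl i, q' => (q : ℕ) = 2 * (i : ℕ) ∧ (q' : ℕ) = 2 * (i : ℕ) + 1
  | q, .inr i, q' => (q : ℕ) = 2 * (i : ℕ) + 1 ∧ q' = q

def BnRcvF (n : ℕ) (q : Fin (2 * n + 1)) (m : Fin n ⊕ Fin n) : Fin (2 * n + 1) :=
  match m with
  | .inl _ => q
  | .inr i =>
      if (q : ℕ) = 2 * (i : ℕ) + 1 then ⟨2 * (i : ℕ) + 2, by have := i.isLt; omega⟩ else q

def Bn (n : ℕ) : BroadcastProtocol (Fin (2 * n + 1)) (Fin n ⊕ Fin n) where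
  I := {0}
  br := BnBr n
  rcv := fun q m q' => q' = BnRcvF n q m
  complete := fun q m => ⟨BnRcvF n q m, rfl⟩

def BnSmiley (n : ℕ) : Fin (2 * n + 1) := ⟨2 * n, by omega⟩


section QuadAux

variable {n : ℕ} {ν : Type} [Fintype ν] [DecidableEq ν] {r : ℕ}

lemma bn_lab_zero (ρ : RExec (Bn n) ν r) (v : ν) : (ρ.lab 0 v : ℕ) = 0 := by
  have h := ρ.init v
  simp only [Bn, Finset.mem_singleton] at h
  simp [h]

/-- Case analysis of one step of `B_n` at node `v`. -/
lemma bn_step (ρ : RExec (Bn n) ν r) (i : Fin r) (v : ν) :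
    ((ρ.lab i.succ v : ℕ) = (ρ.lab i.castSucc v : ℕ)) ∨
    (∃ j : Fin n, (ρ.lab i.castSucc v : ℕ) = 2*j ∧ (ρ.lab i.succ v : ℕ) = 2*j+1 ∧
      ρ.sender i = v ∧ ρ.msg i = Sum.inl j) ∨
    (∃ j : Fin n, (ρ.lab i.castSucc v : ℕ) = 2*j+1 ∧ (ρ.lab i.succ v : ℕ) = 2*j+2 ∧
      ρ.sender i ≠ v ∧ ρ.msg i = Sum.inr j ∧
      (ρ.lab i.succ (ρ.sender i) : ℕ) = 2*j+1) := by
  have hbr := ρ.step_br i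
  by_cases hv : ρ.sender i = v
  · subst hv
    rcases hmsg : ρ.msg i with j | j <;> rw [hmsg] at hbr <;>
      simp only [Bn, BnBr] at hbr
    · exact Or.inr (Or.inl ⟨j, hbr.1, hbr.2, rfl, rfl⟩)
    · left; rw [hbr.2]
  · have hrcv := ρ.step_rcv i v (fun h => hv h.symm)
    by_cases he : ρ.edges i.castSucc (ρ.sender i) v
    · have h1 := hrcv.1 he
      simp only [Bn] at h1
      rcases hmsg : ρ.msg i with j | j <;> rw [hmsg] at h1
      · left; rw [h1]; rfl
      · simp only [BnRcvF] at h1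
        split_ifs at h1 with hq
        · refine Or.inr (Or.inr ⟨j, hq, by rw [h1], hv, rfl, ?_⟩)
          rw [hmsg] at hbr
          simp only [Bn, BnBr] at hbr
          rw [hbr.2]; exact hbr.1
        · left; rw [h1]
    · left; rw [hrcv.2 he]

lemma bn_step_le (ρ : RExec (Bn n) ν r) (i : Fin r) (v : ν) :
    (ρ.lab i.castSucc v : ℕ) ≤ (ρ.lab i.succ v : ℕ) ∧
    (ρ.lab i.succ v : ℕ) ≤ (ρ.lab i.castSucc v : ℕ) + 1 := by
  rcases bn_step ρ i v with h | ⟨j, h1, h2, -⟩ | ⟨j, h1, h2, -⟩ <;> omega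

lemma bn_mono (ρ : RExec (Bn n) ν r) (v : ν) {s t : Fin (r+1)} (h : s ≤ t) :
    (ρ.lab s v : ℕ) ≤ (ρ.lab t v : ℕ) := by
  have := (Fin.monotone_iff_le_succ (f := fun t : Fin (r+1) => (ρ.lab t v : ℕ))).2
    (fun i => (bn_step_le ρ i v).1)
  exact this h

lemma bn_exists_entry (ρ : RExec (Bn n) ν r) (v : ν) (m : ℕ) (hm : 1 ≤ m) (t : Fin (r+1))
    (ht : m ≤ (ρ.lab t v : ℕ)) :
    ∃ i : Fin r, (ρ.lab i.castSucc v : ℕ) + 1 = m ∧ (ρ.lab i.succ v : ℕ) = m := by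
  induction t using Fin.induction with
  | zero => rw [bn_lab_zero] at ht; omega
  | succ i ih =>
    by_cases hc : m ≤ (ρ.lab i.castSucc v : ℕ)
    · exact ih hc
    · have h2 := bn_step_le ρ i v
      exact ⟨i, by omega, by omega⟩

lemma bn_entry_unique (ρ : RExec (Bn n) ν r) (v : ν) (m : ℕ) {i i' : Fin r}
    (h : (ρ.lab i.castSucc v : ℕ) + 1 = m ∧ (ρ.lab i.succ v : ℕ) = m)
    (h' : (ρ.lab i'.castSucc v : ℕ) + 1 = m ∧ (ρ.lab i'.succ v : ℕ) = m) : i = i' := by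
  have key : ∀ a b : Fin r, (a : ℕ) < (b : ℕ) →
      (ρ.lab a.succ v : ℕ) = m → (ρ.lab b.castSucc v : ℕ) + 1 = m → False := by
    intro a b hab ha hb
    have hle : a.succ ≤ b.castSucc := by
      simp only [Fin.le_def, Fin.val_succ, Fin.coe_castSucc]; omega
    have := bn_mono ρ v hle
    omega
  rcases lt_trichotomy (i : ℕ) (i' : ℕ) with hlt | heq | hlt
  · exact absurd (key i i' hlt h.2 h'.1) (by simp)
  · exact Fin.ext heq
  · exact absurd (key i' i hlt h'.2 h.1) (by simp)

lemma bn_entry_odd (ρ : RExec (Bn n) ν r) (i : Fin r) (v : ν) (j : Fin n)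
    (h1 : (ρ.lab i.castSucc v : ℕ) + 1 = 2*j+1) (h2 : (ρ.lab i.succ v : ℕ) = 2*j+1) :
    ρ.sender i = v ∧ ρ.msg i = Sum.inl j := by
  rcases bn_step ρ i v with h | ⟨j', e1, e2, hs, hm⟩ | ⟨j', e1, e2, -⟩
  · omega
  · have : j' = j := Fin.ext (by omega)
    subst this; exact ⟨hs, hm⟩
  · omega

lemma bn_entry_even (ρ : RExec (Bn n) ν r) (i : Fin r) (v : ν) (j : Fin n)
    (h1 : (ρ.lab i.castSucc v : ℕ) + 1 = 2*j+2) (h2 : (ρ.lab i.succ v : ℕ) = 2*j+2) :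
    ρ.msg i = Sum.inr j ∧ (ρ.lab i.succ (ρ.sender i) : ℕ) = 2*j+1 := by
  rcases bn_step ρ i v with h | ⟨j', e1, e2, -⟩ | ⟨j', e1, e2, hs, hm, hsend⟩
  · omega
  · omega
  · have : j' = j := Fin.ext (by omega)
    subst this; exact ⟨hm, hsend⟩

/-- nodes that reach value `≥ 2j+1`. -/
noncomputable def bnM (ρ : RExec (Bn n) ν r) (j : ℕ) : Finset ν :=
  @Finset.filter _ (fun v => ∃ t, 2*j+1 ≤ (ρ.lab t v : ℕ)) (Classical.decPred _) Finset.univ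

/-- nodes that reach value `≥ 2j+2`. -/
noncomputable def bnS (ρ : RExec (Bn n) ν r) (j : ℕ) : Finset ν :=
  @Finset.filter _ (fun v => ∃ t, 2*j+2 ≤ (ρ.lab t v : ℕ)) (Classical.decPred _) Finset.univ

lemma mem_bnM {ρ : RExec (Bn n) ν r} {j : ℕ} {v : ν} :
    v ∈ bnM ρ j ↔ ∃ t, 2*j+1 ≤ (ρ.lab t v : ℕ) := by
  simp [bnM]

lemma mem_bnS {ρ : RExec (Bn n) ν r} {j : ℕ} {v : ν} :
    v ∈ bnS ρ j ↔ ∃ t, 2*j+2 ≤ (ρ.lab t v : ℕ) := by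
  simp [bnS]

lemma bnM_card_le (ρ : RExec (Bn n) ν r) (j : Fin n) :
    (bnM ρ j).card ≤ (Finset.univ.filter fun i : Fin r => ρ.msg i = Sum.inl j).card := by
  classical
  rcases (bnM ρ j).eq_empty_or_nonempty with he | ⟨v0, hv0⟩
  · simp [he]
  · have hent : ∀ v ∈ bnM ρ j, ∃ i : Fin r,
        (ρ.lab i.castSucc v : ℕ) + 1 = 2*j+1 ∧ (ρ.lab i.succ v : ℕ) = 2*j+1 := by
      intro v hv
      obtain ⟨t, ht⟩ := mem_bnM.1 hv
      exact bn_exists_entry ρ v _ (by omega) t ht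
    have hne : Nonempty (Fin r) := ⟨(hent v0 hv0).choose⟩
    set f : ν → Fin r := fun v =>
      if h : ∃ i : Fin r,
        (ρ.lab i.castSucc v : ℕ) + 1 = 2*j+1 ∧ (ρ.lab i.succ v : ℕ) = 2*j+1
      then h.choose else Classical.arbitrary _ with hf
    apply Finset.card_le_card_of_injOn f
    · intro v hv
      have h := hent v hv
      have hspec := h.choose_spec
      have hodd := bn_entry_odd ρ h.choose v j hspec.1 hspec.2
      simp only [hf, dif_pos h, Finset.mem_filter, Finset.mem_univ, true_and]
      simpa using hodd.2
    · intro v hv v' hv' hvv'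
      have h := hent v hv
      have h' := hent v' hv'
      have e1 := (bn_entry_odd ρ h.choose v j h.choose_spec.1 h.choose_spec.2).1
      have e2 := (bn_entry_odd ρ h'.choose v' j h'.choose_spec.1 h'.choose_spec.2).1
      simp only [hf, dif_pos h, dif_pos h'] at hvv'
      rw [← e1, ← e2, hvv']

lemma bnB_card (ρ : RExec (Bn n) ν r) (hcov : ρ.Covers {BnSmiley n}) (j : Fin n) :
    1 ≤ (Finset.univ.filter fun i : Fin r => ρ.msg i = Sum.inr j).card := by
  classical
  obtain ⟨v, hv⟩ := hcov
  have hval : (ρ.lab (Fin.last r) v : ℕ) = 2*n := by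
    have : ρ.lastLab v = BnSmiley n := hv
    have := congrArg Fin.val this
    simpa [RExec.lastLab, BnSmiley] using this
  have hjn := j.isLt
  obtain ⟨i, h1, h2⟩ := bn_exists_entry ρ v (2*j+2) (by omega) (Fin.last r) (by omega)
  have := bn_entry_even ρ i v j h1 h2
  exact Finset.card_pos.mpr ⟨i, by simp [this.1]⟩

lemma bn_chain (ρ : RExec (Bn n) ν r) (j : ℕ) (hj : j < n) (hne : (bnS ρ j).Nonempty) :
    (bnS ρ j).card + 1 ≤ (bnM ρ j).card := by
  classical
  have hsub : bnS ρ j ⊆ bnM ρ j := by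
    intro v hv
    obtain ⟨t, ht⟩ := mem_bnS.1 hv
    exact mem_bnM.2 ⟨t, by omega⟩
  have hent : ∀ v ∈ bnS ρ j, ∃ i : Fin r,
      (ρ.lab i.castSucc v : ℕ) + 1 = 2*j+2 ∧ (ρ.lab i.succ v : ℕ) = 2*j+2 := by
    intro v hv
    obtain ⟨t, ht⟩ := mem_bnS.1 hv
    exact bn_exists_entry ρ v _ (by omega) t ht
  set g : ν → ℕ := fun v =>
    if h : ∃ i : Fin r,
      (ρ.lab i.castSucc v : ℕ) + 1 = 2*j+2 ∧ (ρ.lab i.succ v : ℕ) = 2*j+2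
    then (h.choose : ℕ) else 0 with hg
  obtain ⟨u, hu, hmax⟩ := Finset.exists_max_image (bnS ρ j) g hne
  have hu' := hent u hu
  have hiu := hu'.choose_spec
  have hchar := bn_entry_even ρ hu'.choose u ⟨j, hj⟩ hiu.1 hiu.2
  have hjj : ((⟨j, hj⟩ : Fin n) : ℕ) = j := rfl
  rw [hjj] at hchar
  set s := ρ.sender hu'.choose with hs
  have hsM : s ∈ bnM ρ j := mem_bnM.2 ⟨hu'.choose.succ, by rw [hchar.2]⟩
  have hsS : s ∉ bnS ρ j := by
    intro hins
    have hs' := hent s hins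
    have his := hs'.choose_spec
    have hlt : (hu'.choose : ℕ) < (hs'.choose : ℕ) := by
      by_contra hge
      push_neg at hge
      have hle : hs'.choose.succ ≤ hu'.choose.succ := by
        simp only [Fin.le_def, Fin.val_succ]; omega
      have := bn_mono ρ s hle
      rw [his.2, hchar.2] at this
      omega
    have hgu : g u = (hu'.choose : ℕ) := dif_pos hu'
    have hgs : g s = (hs'.choose : ℕ) := dif_pos hs'
    have := hmax s hins
    rw [hgu, hgs] at this
    omega
  have := Finset.card_lt_card ((Finset.ssubset_iff_of_subset hsub).2 ⟨s, hsM, hsS⟩)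
  omega

lemma bn_Mcard (hn : 1 ≤ n) (ρ : RExec (Bn n) ν r) (hcov : ρ.Covers {BnSmiley n}) :
    ∀ k, k < n → k + 2 ≤ (bnM ρ (n - 1 - k)).card := by
  have hvstar : ∃ v : ν, (ρ.lab (Fin.last r) v : ℕ) = 2*n := by
    obtain ⟨v, hv⟩ := hcov
    have : ρ.lastLab v = BnSmiley n := hv
    exact ⟨v, by simpa [RExec.lastLab, BnSmiley] using congrArg Fin.val this⟩
  intro k
  induction k with
  | zero =>
    intro _
    obtain ⟨v, hv⟩ := hvstar
    have hne : (bnS ρ (n-1)).Nonempty := ⟨v, mem_bnS.2 ⟨Fin.last r, by omega⟩⟩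
    have h1 := bn_chain ρ (n-1) (by omega) hne
    have h2 := Finset.card_pos.mpr hne
    simp only [Nat.sub_zero]
    omega
  | succ k ih =>
    intro hk
    have ihv := ih (by omega)
    have hsub : bnM ρ (n-1-k) ⊆ bnS ρ (n-1-(k+1)) := by
      intro v hv
      obtain ⟨t, ht⟩ := mem_bnM.1 hv
      exact mem_bnS.2 ⟨t, by omega⟩
    have hcard := Finset.card_le_card hsub
    have hne : (bnS ρ (n-1-(k+1))).Nonempty := by
      rw [← Finset.card_pos]; omega
    have h1 := bn_chain ρ (n-1-(k+1)) (by omega) hne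
    omega

lemma bn_rexec_bound (hn : 1 ≤ n) (ρ : RExec (Bn n) ν r)
    (hcov : ρ.Covers {BnSmiley n}) : (n ^ 2 + 5 * n) / 2 ≤ r := by
  classical
  have hr : r = (∑ j : Fin n, (Finset.univ.filter fun i : Fin r => ρ.msg i = Sum.inl j).card)
      + (∑ j : Fin n, (Finset.univ.filter fun i : Fin r => ρ.msg i = Sum.inr j).card) := by
    have h := Finset.card_eq_sum_card_fiberwise
      (f := ρ.msg) (s := Finset.univ) (t := Finset.univ) (fun i _ => Finset.mem_univ _)
    simpa [Fintype.sum_sum_type] using h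
  have hM : ∀ j : Fin n, n + 1 - j ≤ (bnM ρ j).card := by
    intro j
    have hj := j.isLt
    have h := bn_Mcard hn ρ hcov (n - 1 - j) (by omega)
    have e : n - 1 - (n - 1 - j) = j := by omega
    rw [e] at h
    omega
  have h1 : ∑ j : Fin n, (n + 1 - j) ≤
      ∑ j : Fin n, (Finset.univ.filter fun i : Fin r => ρ.msg i = Sum.inl j).card :=
    Finset.sum_le_sum (fun j _ => le_trans (hM j) (bnM_card_le ρ j))
  have h2 : n ≤ ∑ j : Fin n, (Finset.univ.filter fun i : Fin r => ρ.msg i = Sum.inr j).card := by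
    calc n = ∑ _j : Fin n, 1 := by simp
    _ ≤ _ := Finset.sum_le_sum (fun j _ => bnB_card ρ hcov j)
  -- compute the sum
  have e0 : ∑ j : Fin n, (n + 1 - j) = ∑ j ∈ Finset.range n, (n + 1 - j) :=
    Fin.sum_univ_eq_sum_range _ n
  have e1 : ∑ j ∈ Finset.range n, (n + 1 - j) = ∑ j ∈ Finset.range n, (j + 2) := by
    rw [← Finset.sum_range_reflect (fun j => j + 2) n]
    refine Finset.sum_congr rfl (fun j hj => ?_)
    have := Finset.mem_range.1 hj
    omega
  have e2 : ∑ j ∈ Finset.range n, (j + 2) = (∑ j ∈ Finset.range n, j) + 2 * n := by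
    rw [Finset.sum_add_distrib, Finset.sum_const, Finset.card_range, smul_eq_mul, mul_comm]
  have e3 := Finset.sum_range_id_mul_two n
  obtain ⟨m, rfl⟩ : ∃ m, n = m + 1 := ⟨n - 1, by omega⟩
  set a := ∑ j ∈ Finset.range (m+1), j with ha
  have key : (m+1) ^ 2 + 5 * (m+1) = a * 2 + 6 * (m+1) := by
    rw [e3]; simp only [Nat.add_sub_cancel]; ring
  rw [key]
  omega

/-- Every lossy execution induces a reconfigurable execution. -/
noncomputable def LExec.toRExec {Q M : Type} [Fintype Q] [DecidableEq Q] [Fintype M]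
    {P : BroadcastProtocol Q M} {ν : Type} [Fintype ν] [DecidableEq ν] {r : ℕ}
    (ρ : LExec P ν r) : RExec P ν r where
  lab := ρ.lab
  edges := fun t x y => (∀ h : (t:ℕ) < r, ρ.lost ⟨t, h⟩ = false) ∧ ρ.E x y
  edges_symm := fun _ _ _ h => ⟨h.1, ρ.E_symm h.2⟩
  edges_irrefl := fun _ x h => ρ.E_irrefl x h.2
  sender := ρ.sender
  msg := ρ.msg
  init := ρ.init
  step_br := ρ.step_br
  step_rcv := by
    intro i v hv
    have hic : ((i.castSucc : Fin (r+1)) : ℕ) = (i : ℕ) := rfl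
    cases hl : ρ.lost i
    · constructor
      · intro he
        exact (ρ.step_real i hl v hv).1 he.2
      · intro hne
        refine (ρ.step_real i hl v hv).2 (fun hE => hne ⟨fun h => ?_, hE⟩)
        have : (⟨((i.castSucc : Fin (r+1)) : ℕ), h⟩ : Fin r) = i := Fin.ext rfl
        rw [this]; exact hl
    · constructor
      · intro he
        exfalso
        have h2 := he.1 (by simp)
        have : (⟨((i.castSucc : Fin (r+1)) : ℕ), by simp⟩ : Fin r) = i :=
          Fin.ext rfl
        rw [this] at h2
        rw [hl] at h2
        simp at h2
      · intro _
        exact ρ.step_lost i hl v hv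

end QuadAux


/-- **Quadratic lower bound on the covering length.** For every `n ≥ 1`, every
reconfigurable execution of `B_n` covering `{☺}` has length at least
`(n² + 5n) / 2`, and (since every lossy execution induces a reconfigurable one of
the same length) so does every lossy execution of `B_n` covering `{☺}`. -/
theorem covering_length_quadratic_lower_bound (n : ℕ) (hn : 1 ≤ n) :
    (∀ (ν : Type) [Fintype ν] [DecidableEq ν] (r : ℕ) (ρ : RExec (Bn n) ν r),
      ρ.Covers {BnSmiley n} → (n ^ 2 + 5 * n) / 2 ≤ r) ∧
    (∀ (ν : Type) [Fintype ν] [DecidableEq ν] (r : ℕ) (ρ : LExec (Bn n) ν r),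
      ρ.Covers {BnSmiley n} → (n ^ 2 + 5 * n) / 2 ≤ r) := by
  refine ⟨fun ν _ _ r ρ hcov => bn_rexec_bound hn ρ hcov,
    fun ν _ _ r ρ hcov => bn_rexec_bound hn ρ.toRExec hcov⟩
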